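/- arXiv:2510.04478 — 4 statements merged into one kernel-verified Lean document; each statement's English description precedes it below -/
import Mathlib

section
/- Let Q, R be symmetric positive definite matrices with R ⪰ γ_R I, Q − HᵀR⁻¹H ⪰ γ_Q I, and ‖H‖ ≤ λ_H. Then for every ε ∈ (0,1) with γ' := ε·min{γ_Q, γ_R} satisfying γ_Q − (ε/(1−ε))·(λ_H²/γ_R) ≥ ε γ_Q, the block matrix [[Q, Hᵀ],[H, R]] ⪰ γ'I. -/
open Matrix
open scoped Matrix.Norms.L2Operator

lemma dot_self_eq_norm_sq {k : ℕ} (v : Fin k → ℝ) :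
    v ⬝ᵥ v = ‖(EuclideanSpace.equiv (Fin k) ℝ).symm v‖ ^ 2 := by
  rw [EuclideanSpace.norm_eq, Real.sq_sqrt (by positivity)]
  simp [dotProduct, sq]

lemma dot_self_nonneg {k : ℕ} (v : Fin k → ℝ) : 0 ≤ v ⬝ᵥ v :=
  Finset.sum_nonneg fun _ _ => mul_self_nonneg _

lemma mulVec_dot_le {m n : ℕ} (H : Matrix (Fin m) (Fin n) ℝ) (lamH : ℝ)
    (hH : ‖H‖ ≤ lamH) (x : Fin n → ℝ) :
    (H *ᵥ x) ⬝ᵥ (H *ᵥ x) ≤ lamH ^ 2 * (x ⬝ᵥ x) := by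
  have h1 := H.l2_opNorm_mulVec ((EuclideanSpace.equiv (Fin n) ℝ).symm x)
  rw [dot_self_eq_norm_sq, dot_self_eq_norm_sq]
  have h2 : ‖(EuclideanSpace.equiv (Fin m) ℝ).symm (H *ᵥ x)‖ ≤
      lamH * ‖(EuclideanSpace.equiv (Fin n) ℝ).symm x‖ :=
    h1.trans (mul_le_mul_of_nonneg_right hH (norm_nonneg _))
  calc ‖(EuclideanSpace.equiv (Fin m) ℝ).symm (H *ᵥ x)‖ ^ 2
      ≤ (lamH * ‖(EuclideanSpace.equiv (Fin n) ℝ).symm x‖) ^ 2 :=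
        pow_le_pow_left₀ (norm_nonneg _) h2 2
    _ = lamH ^ 2 * ‖(EuclideanSpace.equiv (Fin n) ℝ).symm x‖ ^ 2 := by ring

/-- If R ⪰ γ_R I, Q − HᵀR⁻¹H ⪰ γ_Q I, ‖H‖ ≤ λ_H, then for every
ε ∈ (0,1) with γ_Q − (ε/(1−ε))·(λ_H²/γ_R) ≥ ε γ_Q, the block matrix
[[Q, Hᵀ],[H, R]] ⪰ (ε·min{γ_Q,γ_R}) I. -/
theorem stmt_1 {n m : ℕ} (Q : Matrix (Fin n) (Fin n) ℝ) (H : Matrix (Fin m) (Fin n) ℝ)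
    (R : Matrix (Fin m) (Fin m) ℝ) (hQ : Q.PosDef) (hR : R.PosDef)
    (γQ γR lamH : ℝ) (hγQ : 0 < γQ) (hγR : 0 < γR)
    (hRlb : (R - γR • 1).PosSemidef)
    (hSchur : (Q - Hᵀ * R⁻¹ * H - γQ • 1).PosSemidef)
    (hH : ‖H‖ ≤ lamH)
    (ε : ℝ) (hε : ε ∈ Set.Ioo (0 : ℝ) 1)
    (hcond : ε * γQ ≤ γQ - ε / (1 - ε) * (lamH ^ 2 / γR)) :
    (Matrix.fromBlocks Q Hᵀ H R - (ε * min γQ γR) • 1).PosSemidef := by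
  obtain ⟨hε0, hε1⟩ := hε
  have hε1' : (0:ℝ) < 1 - ε := by linarith
  have hRT : Rᵀ = R := by
    have := hR.1
    rwa [← Matrix.conjTranspose_eq_transpose_of_trivial]
  have hlam0 : (0:ℝ) ≤ lamH := le_trans (norm_nonneg H) hH
  have hcond' : ε * lamH ^ 2 ≤ (1 - ε) ^ 2 * γQ * γR := by
    have h1 : ε / (1 - ε) * (lamH ^ 2 / γR) ≤ (1 - ε) * γQ := by linarith
    have h2 := mul_le_mul_of_nonneg_left h1 (le_of_lt (mul_pos hε1' hγR))
    calc ε * lamH ^ 2 = (1 - ε) * γR * (ε / (1 - ε) * (lamH ^ 2 / γR)) := by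
          field_simp
      _ ≤ (1 - ε) * γR * ((1 - ε) * γQ) := h2
      _ = (1 - ε) ^ 2 * γQ * γR := by ring
  refine Matrix.PosSemidef.of_dotProduct_mulVec_nonneg ?_ ?_
  · -- Hermitian
    apply Matrix.IsHermitian.sub
    · rw [Matrix.isHermitian_fromBlocks_iff]
      refine ⟨hQ.1, ?_, ?_, hR.1⟩
      · rw [Matrix.conjTranspose_eq_transpose_of_trivial, Matrix.transpose_transpose]
      · rw [Matrix.conjTranspose_eq_transpose_of_trivial]
    · unfold Matrix.IsHermitian
      rw [Matrix.conjTranspose_smul, Matrix.conjTranspose_one, star_trivial]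
  · intro z
    set x : Fin n → ℝ := z ∘ Sum.inl with hx
    set y : Fin m → ℝ := z ∘ Sum.inr with hy
    have hz : z = Sum.elim x y := (Sum.elim_comp_inl_inr z).symm
    have hdet : IsUnit R.det := isUnit_iff_ne_zero.2 (ne_of_gt hR.det_pos)
    set u : Fin m → ℝ := H *ᵥ x with hu
    set w : Fin m → ℝ := R⁻¹ *ᵥ u with hw
    have hRw : R *ᵥ w = u := by
      rw [hw, Matrix.mulVec_mulVec, Matrix.mul_nonsing_inv R hdet, Matrix.one_mulVec]
    set a : ℝ := x ⬝ᵥ (Q *ᵥ x) with ha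
    set b : ℝ := y ⬝ᵥ u with hb
    set c : ℝ := y ⬝ᵥ (R *ᵥ y) with hc
    set s : ℝ := u ⬝ᵥ w with hs
    set nx : ℝ := x ⬝ᵥ x with hnx
    set ny : ℝ := y ⬝ᵥ y with hny
    have hnx0 : 0 ≤ nx := dot_self_nonneg x
    have hny0 : 0 ≤ ny := dot_self_nonneg y
    have hquadQ : γQ * nx + s ≤ a := by
      have h := hSchur.dotProduct_mulVec_nonneg x
      have hxs : x ⬝ᵥ ((Hᵀ * R⁻¹ * H) *ᵥ x) = s := by
        rw [Matrix.mul_assoc, ← Matrix.mulVec_mulVec, ← Matrix.mulVec_mulVec,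
          Matrix.dotProduct_mulVec, Matrix.vecMul_transpose]
      simp only [Matrix.sub_mulVec, Matrix.smul_mulVec, Matrix.one_mulVec,
        dotProduct_sub, dotProduct_smul, star_trivial, hxs] at h
      simp only [smul_eq_mul] at h
      rw [ha, hnx]
      linarith [h]
    have hRlow : ∀ v : Fin m → ℝ, γR * (v ⬝ᵥ v) ≤ v ⬝ᵥ (R *ᵥ v) := by
      intro v
      have h := hRlb.dotProduct_mulVec_nonneg v
      simp only [Matrix.sub_mulVec, Matrix.smul_mulVec, Matrix.one_mulVec,
        dotProduct_sub, dotProduct_smul, star_trivial, smul_eq_mul] at h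
      linarith [h]
    have hcR : γR * ny ≤ c := hRlow y
    have hwRw : w ⬝ᵥ (R *ᵥ w) = s := by rw [hRw, dotProduct_comm, hs]
    have hsw : γR * (w ⬝ᵥ w) ≤ s := by rw [← hwRw]; exact hRlow w
    have hs0 : 0 ≤ s := le_trans (mul_nonneg (le_of_lt hγR) (dot_self_nonneg w)) hsw
    have huu : u ⬝ᵥ u ≤ lamH ^ 2 * nx := mulVec_dot_le H lamH hH x
    have hγRs : γR * s ≤ lamH ^ 2 * nx := by
      have hexp : (0:ℝ) ≤ (u - γR • w) ⬝ᵥ (u - γR • w) := dot_self_nonneg _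
      have hcomm : w ⬝ᵥ u = u ⬝ᵥ w := dotProduct_comm _ _
      have h2 : (u - γR • w) ⬝ᵥ (u - γR • w)
          = u ⬝ᵥ u - 2 * γR * s + γR ^ 2 * (w ⬝ᵥ w) := by
        simp only [sub_dotProduct, dotProduct_sub, smul_dotProduct,
          dotProduct_smul, smul_eq_mul, hcomm, ← hs]
        ring
      nlinarith [hsw, hexp, h2]
    have hcomp : 0 ≤ (1 - ε) ^ 2 * c + 2 * (1 - ε) * b + s := by
      set v : Fin m → ℝ := y + (1 / (1 - ε)) • w with hv
      have hpos := hR.posSemidef.dotProduct_mulVec_nonneg v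
      simp only [star_trivial] at hpos
      have hexp : v ⬝ᵥ (R *ᵥ v) = c + 2 * (1 / (1 - ε)) * b + (1 / (1 - ε)) ^ 2 * s := by
        rw [hv, Matrix.mulVec_add, Matrix.mulVec_smul, add_dotProduct,
          dotProduct_add, dotProduct_add, smul_dotProduct,
          dotProduct_smul, dotProduct_smul, hRw]
        have h2 : w ⬝ᵥ (R *ᵥ y) = b := by
          rw [Matrix.dotProduct_mulVec]
          have hvm : w ᵥ* R = R *ᵥ w := by rw [← hRT, Matrix.vecMul_transpose, hRT]
          rw [hvm, hRw, dotProduct_comm, hb]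
        simp only [smul_dotProduct, dotProduct_smul, smul_eq_mul, h2,
          ← hb, ← hc]
        have h3 : w ⬝ᵥ u = s := by rw [dotProduct_comm, hs]
        rw [h3]
        ring
      rw [hexp] at hpos
      have hmm := mul_nonneg (le_of_lt (mul_pos hε1' hε1')) hpos
      calc (0:ℝ) ≤ ((1-ε)*(1-ε)) * (c + 2 * (1 / (1 - ε)) * b + (1 / (1 - ε)) ^ 2 * s) := hmm
        _ = (1 - ε) ^ 2 * c + 2 * (1 - ε) * b + s := by field_simp
    have hmin1 : ε * min γQ γR ≤ ε * γQ :=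
      mul_le_mul_of_nonneg_left (min_le_left _ _) (le_of_lt hε0)
    have hmin2 : ε * min γQ γR ≤ ε * γR :=
      mul_le_mul_of_nonneg_left (min_le_right _ _) (le_of_lt hε0)
    have hgoal : star z ⬝ᵥ ((Matrix.fromBlocks Q Hᵀ H R - (ε * min γQ γR) • 1) *ᵥ z)
        = a + 2 * b + c - (ε * min γQ γR) * (nx + ny) := by
      rw [Matrix.sub_mulVec, Matrix.smul_mulVec, Matrix.one_mulVec,
        dotProduct_sub, dotProduct_smul, star_trivial]
      rw [hz, Matrix.fromBlocks_mulVec]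
      have hxl : Sum.elim x y ∘ Sum.inl = x := rfl
      have hyl : Sum.elim x y ∘ Sum.inr = y := rfl
      rw [hxl, hyl, sumElim_dotProduct_sumElim,
        dotProduct_add, dotProduct_add, sumElim_dotProduct_sumElim]
      have h1 : x ⬝ᵥ (Hᵀ *ᵥ y) = b := by
        rw [Matrix.dotProduct_mulVec, Matrix.vecMul_transpose, dotProduct_comm,
          ← hu, ← hb]
      rw [h1, ← ha, ← hu, ← hb, ← hc, ← hnx, ← hny]
      simp only [smul_eq_mul]
      ring
    rw [hgoal]
    clear hgoal hz hRw hwRw hsw huu hRlow hu hw hx hy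
    clear_value a b c s nx ny x y u w
    clear hnx hny ha hb hc hs
    clear x y u w z hdet hSchur hRlb hR hQ hH hcond hRT Q R H
    have e1 : ε * s ≤ (1 - ε) ^ 2 * γQ * nx := by
      have h1 := mul_le_mul_of_nonneg_left hγRs (le_of_lt hε0)
      have h2 := mul_le_mul_of_nonneg_right hcond' hnx0
      nlinarith [h1, h2, hγR]
    have key : (1 - ε) * ((ε * min γQ γR) * (nx + ny)) ≤ (1 - ε) * (a + 2 * b + c) := by
      nlinarith [mul_le_mul_of_nonneg_left hquadQ (le_of_lt hε1'), hcomp, e1,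
        mul_le_mul_of_nonneg_left hcR (mul_nonneg (le_of_lt hε0) (le_of_lt hε1')),
        mul_le_mul_of_nonneg_right hmin1 hnx0,
        mul_le_mul_of_nonneg_right hmin2 hny0]
    have hPT : (ε * min γQ γR) * (nx + ny) ≤ a + 2 * b + c :=
      le_of_mul_le_mul_left key hε1'
    linarith [hPT]
end

section
/- Among all controls u ∈ L²([t₀,t₁]; ℝ^m) steering the system ẋ = A(t)x + B(t)u from v at t₀ to 0 at t₁ (with W = W_{A,B}(t₀,t₁) ≻ 0), the control ū(t) = −B(t)ᵀΦ_A(t₀,t)ᵀ W⁻¹ v attains the minimal squared L² norm, and ∫_{t₀}^{t₁} ‖ū(t)‖² dt = vᵀ W⁻¹ v. -/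
open Matrix Set MeasureTheory
open scoped Matrix.Norms.L2Operator



lemma linear_ode_unique {n : ℕ} (A : ℝ → Matrix (Fin n) (Fin n) ℝ) (hAc : Continuous A)
    (f g : ℝ → Matrix (Fin n) (Fin n) ℝ)
    (hf : ∀ t, HasDerivAt f (A t * f t) t) (hg : ∀ t, HasDerivAt g (A t * g t) t)
    (c : ℝ) (hfg : f c = g c) (t : ℝ) : f t = g t := by
  set a := min t c - 1 with ha
  set b := max t c + 1 with hb
  have hab : a ≤ b := by
    have : min t c ≤ max t c := le_trans (min_le_left _ _) (le_max_left _ _)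
    simp only [ha, hb]; linarith
  obtain ⟨C, hC⟩ : ∃ C, ∀ s ∈ Icc a b, ‖A s‖ ≤ C :=
    isCompact_Icc.exists_bound_of_continuousOn hAc.continuousOn
  have hC0 : 0 ≤ C := le_trans (norm_nonneg _) (hC a ⟨le_refl a, hab⟩)
  set A' : ℝ → Matrix (Fin n) (Fin n) ℝ := fun s => A (max a (min s b)) with hA'
  have hA'eq : ∀ s ∈ Icc a b, A' s = A s := by
    intro s hs
    simp only [hA', min_eq_left hs.2, max_eq_right hs.1]
  have hlip : ∀ s : ℝ, LipschitzOnWith ⟨C, hC0⟩ (fun x => A' s * x) (univ : Set (Matrix (Fin n) (Fin n) ℝ)) := by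
    intro s
    apply LipschitzWith.lipschitzOnWith
    apply LipschitzWith.of_dist_le_mul
    intro x y
    rw [dist_eq_norm, dist_eq_norm, ← mul_sub]
    calc ‖A' s * (x - y)‖ ≤ ‖A' s‖ * ‖x - y‖ := norm_mul_le _ _
      _ ≤ C * ‖x - y‖ := by
          apply mul_le_mul_of_nonneg_right _ (norm_nonneg _)
          exact hC _ ⟨le_max_left _ _, max_le hab (min_le_right _ _)⟩
  have key : EqOn f g (Icc a b) := by
    apply ODE_solution_unique_of_mem_Icc (v := fun s x => A' s * x)
      (s := fun _ => (univ : Set (Matrix (Fin n) (Fin n) ℝ))) (fun s _ => hlip s)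
      (t₀ := c) (a := a) (b := b)
    · constructor
      · simp only [ha]; have := min_le_right t c; linarith
      · simp only [hb]; have := le_max_right t c; linarith
    · exact (continuous_iff_continuousAt.2 fun s => (hf s).continuousAt).continuousOn
    · intro s hs
      rw [hA'eq s (Ioo_subset_Icc_self hs)]
      exact hf s
    · intro s _; trivial
    · exact (continuous_iff_continuousAt.2 fun s => (hg s).continuousAt).continuousOn
    · intro s hs
      rw [hA'eq s (Ioo_subset_Icc_self hs)]
      exact hg s
    · intro s _; trivial
    · exact hfg
  exact key ⟨by simp only [ha]; have := min_le_left t c; linarith,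
             by simp only [hb]; have := le_max_left t c; linarith⟩

lemma phi_semigroup {n : ℕ} (A : ℝ → Matrix (Fin n) (Fin n) ℝ) (hAc : Continuous A)
    (Φ : ℝ → ℝ → Matrix (Fin n) (Fin n) ℝ)
    (hΦderiv : ∀ s t : ℝ, HasDerivAt (fun r => Φ r s) (A t * Φ t s) t)
    (hΦinit : ∀ s : ℝ, Φ s s = 1) (a b c : ℝ) :
    Φ a b * Φ b c = Φ a c := by
  have := linear_ode_unique A hAc (fun r => Φ r b * Φ b c) (fun r => Φ r c)
    (fun t => by
      have := (hΦderiv b t).mul_const (Φ b c)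
      rwa [mul_assoc] at this)
    (fun t => hΦderiv c t) b (by simp [hΦinit b]) a
  exact this

/-- Controllability Gramian. -/
noncomputable def gram {n m : ℕ} (Φ : ℝ → ℝ → Matrix (Fin n) (Fin n) ℝ)
    (B : ℝ → Matrix (Fin n) (Fin m) ℝ) (t₀ t₁ : ℝ) : Matrix (Fin n) (Fin n) ℝ :=
  ∫ s in t₀..t₁, Φ t₀ s * B s * (B s)ᵀ * (Φ t₀ s)ᵀ

/-- among all square-integrable controls steering v at t₀ to 0 at t₁,
ū(t) = −B(t)ᵀΦ(t₀,t)ᵀW⁻¹v attains the minimal squared L² norm, and its squared L²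
norm equals vᵀW⁻¹v. -/
theorem stmt_8 {n m : ℕ} (t₀ t₁ : ℝ) (ht : t₀ ≤ t₁)
    (A : ℝ → Matrix (Fin n) (Fin n) ℝ) (B : ℝ → Matrix (Fin n) (Fin m) ℝ)
    (hAc : Continuous A) (hBc : Continuous B)
    (Φ : ℝ → ℝ → Matrix (Fin n) (Fin n) ℝ)
    (hΦderiv : ∀ s t : ℝ, HasDerivAt (fun r => Φ r s) (A t * Φ t s) t)
    (hΦinit : ∀ s : ℝ, Φ s s = 1)
    (hW : (gram Φ B t₀ t₁).PosDef)
    (v : Fin n → ℝ)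
    (ubar : ℝ → Fin m → ℝ)
    (hubar : ∀ t, ubar t = -((B t)ᵀ *ᵥ ((Φ t₀ t)ᵀ *ᵥ ((gram Φ B t₀ t₁)⁻¹ *ᵥ v)))) :
    (∫ t in t₀..t₁, ubar t ⬝ᵥ ubar t) = v ⬝ᵥ ((gram Φ B t₀ t₁)⁻¹ *ᵥ v) ∧
    ∀ u : ℝ → Fin m → ℝ,
      IntervalIntegrable u volume t₀ t₁ →
      IntervalIntegrable (fun t => u t ⬝ᵥ u t) volume t₀ t₁ →
      Φ t₁ t₀ *ᵥ v + (∫ s in t₀..t₁, Φ t₁ s *ᵥ (B s *ᵥ u s)) = 0 →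
      (∫ t in t₀..t₁, ubar t ⬝ᵥ ubar t) ≤ ∫ t in t₀..t₁, u t ⬝ᵥ u t := by
  have hsg : ∀ a b c : ℝ, Φ a b * Φ b c = Φ a c := phi_semigroup A hAc Φ hΦderiv hΦinit
  set W := gram Φ B t₀ t₁ with hWdef
  set w := W⁻¹ *ᵥ v with hwdef
  set G : ℝ → Matrix (Fin n) (Fin n) ℝ := fun s => Φ t₀ s * B s * (B s)ᵀ * (Φ t₀ s)ᵀ with hGdef
  have hWint : W = ∫ s in t₀..t₁, G s := rfl
  have hGint : IntervalIntegrable G volume t₀ t₁ := by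
    rcases Nat.eq_zero_or_pos n with hn | hn
    · subst hn
      have : G = fun _ => 0 := funext fun s => Subsingleton.elim _ _
      rw [this]; exact intervalIntegrable_const
    · by_contra h
      have hW0 : W = 0 := by rw [hWint, intervalIntegral.integral_undef h]
      have hx : (fun _ => (1:ℝ) : Fin n → ℝ) ≠ 0 := by
        intro hcc
        have := congrFun hcc ⟨0, hn⟩
        simpa using this
      have := hW.dotProduct_mulVec_pos hx
      rw [hW0] at this
      simp at this
  have hWunit : IsUnit W.det := hW.det_pos.ne'.isUnit
  have hWv : W *ᵥ w = v := by
    rw [hwdef, mulVec_mulVec, Matrix.mul_nonsing_inv _ hWunit, one_mulVec]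
  -- pointwise identities
  have hpt1 : ∀ s, ubar s ⬝ᵥ ubar s = w ⬝ᵥ (G s *ᵥ w) := by
    intro s
    have hGs : G s = (Φ t₀ s * B s) * (Φ t₀ s * B s)ᵀ := by
      rw [transpose_mul, ← Matrix.mul_assoc]
    rw [hubar, hGs, ← Matrix.mulVec_mulVec, dotProduct_mulVec w]
    simp only [mulVec_transpose, vecMul_vecMul, neg_dotProduct, dotProduct_neg, neg_neg,
      transpose_mul]
    rw [show (B s)ᵀ * (Φ t₀ s)ᵀ = (Φ t₀ s * B s)ᵀ from (transpose_mul _ _).symm,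
      mulVec_transpose]
  have hptu : ∀ (u : ℝ → Fin m → ℝ) (s : ℝ),
      ubar s ⬝ᵥ u s = -(w ⬝ᵥ (Φ t₀ t₁ *ᵥ (Φ t₁ s *ᵥ (B s *ᵥ u s)))) := by
    intro u s
    rw [Matrix.mulVec_mulVec, hsg t₀ t₁ s, hubar]
    simp [mulVec_transpose, vecMul_vecMul, dotProduct_mulVec]
  -- continuous linear maps
  let LwL : Matrix (Fin n) (Fin n) ℝ →ₗ[ℝ] ℝ :=
    { toFun := fun M => w ⬝ᵥ (M *ᵥ w)
      map_add' := fun M N => by simp [add_mulVec, dotProduct_add]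
      map_smul' := fun r M => by simp [smul_mulVec, dotProduct_smul] }
  let Lw : Matrix (Fin n) (Fin n) ℝ →L[ℝ] ℝ := LinearMap.toContinuousLinearMap LwL
  have hLw : ∀ M, Lw M = w ⬝ᵥ (M *ᵥ w) := fun _ => rfl
  let LdL : (Fin n → ℝ) →ₗ[ℝ] ℝ :=
    { toFun := fun x => w ⬝ᵥ (Φ t₀ t₁ *ᵥ x)
      map_add' := fun x y => by simp [mulVec_add, dotProduct_add]
      map_smul' := fun r x => by simp [mulVec_smul, dotProduct_smul] }
  let Ld : (Fin n → ℝ) →L[ℝ] ℝ := LinearMap.toContinuousLinearMap LdL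
  have hLd : ∀ x, Ld x = w ⬝ᵥ (Φ t₀ t₁ *ᵥ x) := fun _ => rfl
  -- part 1
  have hbb_int : IntervalIntegrable (fun s => ubar s ⬝ᵥ ubar s) volume t₀ t₁ := by
    have h1 : IntervalIntegrable (fun s => Lw (G s)) volume t₀ t₁ :=
      ⟨Lw.integrable_comp hGint.1, Lw.integrable_comp hGint.2⟩
    have : (fun s => ubar s ⬝ᵥ ubar s) = fun s => Lw (G s) := by
      funext s; exact (hpt1 s).trans (hLw _).symm
    rwa [this]
  have part1 : (∫ t in t₀..t₁, ubar t ⬝ᵥ ubar t) = w ⬝ᵥ v := by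
    calc (∫ t in t₀..t₁, ubar t ⬝ᵥ ubar t) = ∫ t in t₀..t₁, Lw (G t) := by
          apply intervalIntegral.integral_congr
          intro s _; exact (hpt1 s).trans (hLw _).symm
      _ = Lw (∫ t in t₀..t₁, G t) := Lw.intervalIntegral_comp_comm hGint
      _ = w ⬝ᵥ (W *ᵥ w) := by rw [← hWint]; exact hLw _
      _ = w ⬝ᵥ v := by rw [hWv]
  refine ⟨by rw [part1, dotProduct_comm], ?_⟩
  -- part 2
  intro u hu hu2 hsteer
  by_cases hcase : IntervalIntegrable (fun s => Φ t₁ s *ᵥ (B s *ᵥ u s)) volume t₀ t₁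
  · have hIv : (∫ s in t₀..t₁, Φ t₁ s *ᵥ (B s *ᵥ u s)) = -(Φ t₁ t₀ *ᵥ v) :=
      eq_neg_of_add_eq_zero_right hsteer
    have hbu_int : IntervalIntegrable (fun s => ubar s ⬝ᵥ u s) volume t₀ t₁ := by
      have h1 : IntervalIntegrable (fun s => -(Ld (Φ t₁ s *ᵥ (B s *ᵥ u s)))) volume t₀ t₁ :=
        IntervalIntegrable.neg ⟨Ld.integrable_comp hcase.1, Ld.integrable_comp hcase.2⟩
      have : (fun s => ubar s ⬝ᵥ u s) = fun s => -(Ld (Φ t₁ s *ᵥ (B s *ᵥ u s))) := by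
        funext s; exact (hptu u s).trans (congrArg Neg.neg (hLd _).symm)
      rwa [this]
    have hbu_val : (∫ s in t₀..t₁, ubar s ⬝ᵥ u s) = w ⬝ᵥ v := by
      calc (∫ s in t₀..t₁, ubar s ⬝ᵥ u s)
          = ∫ s in t₀..t₁, -(Ld (Φ t₁ s *ᵥ (B s *ᵥ u s))) := by
            apply intervalIntegral.integral_congr
            intro s _; exact (hptu u s).trans (congrArg Neg.neg (hLd _).symm)
        _ = -(∫ s in t₀..t₁, Ld (Φ t₁ s *ᵥ (B s *ᵥ u s))) := intervalIntegral.integral_neg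
        _ = -(Ld (∫ s in t₀..t₁, Φ t₁ s *ᵥ (B s *ᵥ u s))) := by
            rw [Ld.intervalIntegral_comp_comm hcase]
        _ = -(Ld (-(Φ t₁ t₀ *ᵥ v))) := by rw [hIv]
        _ = Ld (Φ t₁ t₀ *ᵥ v) := by rw [map_neg, neg_neg]
        _ = w ⬝ᵥ v := by
            rw [hLd _, Matrix.mulVec_mulVec, hsg t₀ t₁ t₀, hΦinit t₀, one_mulVec]
    have hnn : 0 ≤ ∫ s in t₀..t₁, (u s - ubar s) ⬝ᵥ (u s - ubar s) := by
      apply intervalIntegral.integral_nonneg ht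
      intro s _
      exact Finset.sum_nonneg fun i _ => mul_self_nonneg _
    have hexp : (∫ s in t₀..t₁, (u s - ubar s) ⬝ᵥ (u s - ubar s))
        = (∫ s in t₀..t₁, u s ⬝ᵥ u s) - 2 * (∫ s in t₀..t₁, ubar s ⬝ᵥ u s)
          + (∫ s in t₀..t₁, ubar s ⬝ᵥ ubar s) := by
      have hpw : ∀ s, (u s - ubar s) ⬝ᵥ (u s - ubar s)
          = u s ⬝ᵥ u s - 2 * (ubar s ⬝ᵥ u s) + ubar s ⬝ᵥ ubar s := by
        intro s
        rw [sub_dotProduct, dotProduct_sub, dotProduct_sub,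
          dotProduct_comm (u s) (ubar s)]
        ring
      calc (∫ s in t₀..t₁, (u s - ubar s) ⬝ᵥ (u s - ubar s))
          = ∫ s in t₀..t₁, (u s ⬝ᵥ u s - 2 * (ubar s ⬝ᵥ u s) + ubar s ⬝ᵥ ubar s) := by
            apply intervalIntegral.integral_congr
            intro s _; exact hpw s
        _ = (∫ s in t₀..t₁, u s ⬝ᵥ u s) - 2 * (∫ s in t₀..t₁, ubar s ⬝ᵥ u s)
            + (∫ s in t₀..t₁, ubar s ⬝ᵥ ubar s) := by
            rw [intervalIntegral.integral_add (hu2.sub (hbu_int.const_mul 2)) hbb_int,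
              intervalIntegral.integral_sub hu2 (hbu_int.const_mul 2),
              intervalIntegral.integral_const_mul]
    rw [part1]
    rw [hbu_val, part1] at hexp
    linarith
  · rw [intervalIntegral.integral_undef hcase, add_zero] at hsteer
    have hv0 : v = 0 := by
      have h2 := congrArg (fun x => Φ t₀ t₁ *ᵥ x) hsteer
      simpa [Matrix.mulVec_mulVec, hsg t₀ t₁ t₀, hΦinit t₀] using h2
    have hz : ∀ s, ubar s ⬝ᵥ ubar s = 0 := by
      intro s; rw [hubar]; simp [hwdef, hv0]
    calc (∫ t in t₀..t₁, ubar t ⬝ᵥ ubar t) = ∫ t in t₀..t₁, (0:ℝ) := by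
          apply intervalIntegral.integral_congr
          intro s _; exact hz s
      _ = 0 := by simp
      _ ≤ ∫ t in t₀..t₁, u t ⬝ᵥ u t := by
          apply intervalIntegral.integral_nonneg ht
          intro s _
          exact Finset.sum_nonneg fun i _ => mul_self_nonneg _
end

section
/- Let Z : [0,T] → ℝ^{n×n} be continuous with evolution operator bound ‖Φ_Z(t,s)‖ ≤ c e^{−ρ(t−s)} for 0 ≤ s ≤ t ≤ T (c ≥ 1, ρ > 0), and let δv : [0,T] → ℝ^n satisfy ‖δv(s)‖ ≤ L e^{−ρ(t'−s)} for s ≤ t' and δv(s) = 0 for s > t', for some fixed t' ∈ [0,T] and L ≥ 0. Then for any continuous M : [0,T] → ℝ^{n×n} with ‖M(s)‖ ≤ μ, the function δx(t) = −∫₀ᵗ Φ_Z(t,s) M(s) δv(s) ds satisfies ‖δx(t)‖ ≤ (cLμ/(2ρ)) e^{−ρ|t−t'|} for all t ∈ [0,T]. -/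
open Matrix Set
open scoped Matrix.Norms.L2Operator Interval

set_option maxHeartbeats 1000000 in
/-- the convolution estimate underlying exponential decay of
sensitivity: with ‖Φ_Z(t,s)‖ ≤ c e^{−ρ(t−s)}, ‖δv(s)‖ ≤ L e^{−ρ(t'−s)} for s ≤ t',
δv = 0 beyond t', and ‖M‖ ≤ μ, the function δx(t) = −∫₀ᵗ Φ_Z(t,s)M(s)δv(s) ds
satisfies ‖δx(t)‖ ≤ (cLμ/(2ρ)) e^{−ρ|t−t'|}. -/
theorem stmt_15 {n : ℕ} (T c ρ L μ t' : ℝ) (hT : 0 ≤ T) (hc : 1 ≤ c) (hρ : 0 < ρ)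
    (hL : 0 ≤ L) (hμ : 0 ≤ μ) (ht' : t' ∈ Icc (0 : ℝ) T)
    (Z : ℝ → Matrix (Fin n) (Fin n) ℝ) (hZc : ContinuousOn Z (Icc 0 T))
    (Φ : ℝ → ℝ → Matrix (Fin n) (Fin n) ℝ)
    (hΦderiv : ∀ s t : ℝ, HasDerivAt (fun r => Φ r s) (Z t * Φ t s) t)
    (hΦinit : ∀ s : ℝ, Φ s s = 1)
    (hΦbd : ∀ s t : ℝ, 0 ≤ s → s ≤ t → t ≤ T → ‖Φ t s‖ ≤ c * Real.exp (-ρ * (t - s)))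
    (δv : ℝ → EuclideanSpace ℝ (Fin n))
    (hδv1 : ∀ s ∈ Icc (0 : ℝ) T, s ≤ t' → ‖δv s‖ ≤ L * Real.exp (-ρ * (t' - s)))
    (hδv2 : ∀ s ∈ Icc (0 : ℝ) T, t' < s → δv s = 0)
    (M : ℝ → Matrix (Fin n) (Fin n) ℝ)
    (hMc : ContinuousOn M (Icc 0 T))
    (hMb : ∀ s ∈ Icc (0 : ℝ) T, ‖M s‖ ≤ μ)
    (δx : ℝ → EuclideanSpace ℝ (Fin n))
    (hδx : ∀ t, δx t = -∫ s in (0 : ℝ)..t,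
      Matrix.toEuclideanLin (Φ t s) (Matrix.toEuclideanLin (M s) (δv s))) :
    ∀ t ∈ Icc (0 : ℝ) T,
      ‖δx t‖ ≤ c * L * μ / (2 * ρ) * Real.exp (-ρ * |t - t'|) := by
  intro t ht
  obtain ⟨ht0, htT⟩ := ht
  set m : ℝ := min t t' with hm
  have hm0 : 0 ≤ m := le_min ht0 ht'.1
  have hmt : m ≤ t := min_le_left _ _
  set C : ℝ := c * L * μ * Real.exp (-ρ * (t + t')) with hC
  have hC0 : 0 ≤ C := by positivity
  set g : ℝ → ℝ := Set.indicator {x : ℝ | x ≤ m} (fun s => C * Real.exp (2 * ρ * s)) with hg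
  have hcont : Continuous fun s : ℝ => C * Real.exp (2 * ρ * s) :=
    continuous_const.mul (Real.continuous_exp.comp ((continuous_const.mul continuous_id)))
  have hint : IntervalIntegrable g MeasureTheory.volume 0 t := by
    rw [intervalIntegrable_iff]
    exact (hcont.integrableOn_uIoc).indicator measurableSet_Iic
  have hbound : ∀ s ∈ Ι (0 : ℝ) t,
      ‖Matrix.toEuclideanLin (Φ t s) (Matrix.toEuclideanLin (M s) (δv s))‖ ≤ g s := by
    intro s hs
    rw [Set.uIoc_of_le ht0] at hs
    obtain ⟨hs0, hst⟩ := hs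
    have hsIcc : s ∈ Icc (0 : ℝ) T := ⟨hs0.le, hst.trans htT⟩
    by_cases hsm : s ≤ m
    · have hst' : s ≤ t' := hsm.trans (min_le_right _ _)
      have hgs : g s = C * Real.exp (2 * ρ * s) :=
        Set.indicator_of_mem (show s ∈ {x : ℝ | x ≤ m} from hsm) _
      rw [hgs]
      have h1 : ‖Φ t s‖ ≤ c * Real.exp (-ρ * (t - s)) := hΦbd s t hs0.le hst htT
      have h2 : ‖M s‖ ≤ μ := hMb s hsIcc
      have h3 : ‖δv s‖ ≤ L * Real.exp (-ρ * (t' - s)) := hδv1 s hsIcc hst'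
      calc ‖Matrix.toEuclideanLin (Φ t s) (Matrix.toEuclideanLin (M s) (δv s))‖
          ≤ ‖Φ t s‖ * ‖Matrix.toEuclideanLin (M s) (δv s)‖ := by
              rw [(Φ t s).l2_opNorm_def]; exact ContinuousLinearMap.le_opNorm ((toEuclideanLin ≪≫ₗ LinearMap.toContinuousLinearMap) (Φ t s)) (toEuclideanLin (M s) (δv s))
        _ ≤ ‖Φ t s‖ * (‖M s‖ * ‖δv s‖) :=
            mul_le_mul_of_nonneg_left (by rw [(M s).l2_opNorm_def]; exact ContinuousLinearMap.le_opNorm ((toEuclideanLin ≪≫ₗ LinearMap.toContinuousLinearMap) (M s)) (δv s)) (norm_nonneg _)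
        _ ≤ (c * Real.exp (-ρ * (t - s))) * (μ * (L * Real.exp (-ρ * (t' - s)))) :=
            mul_le_mul h1
              (mul_le_mul h2 h3 (norm_nonneg _) hμ)
              (mul_nonneg (norm_nonneg _) (norm_nonneg _)) (by positivity)
        _ = C * Real.exp (2 * ρ * s) := by
            rw [hC, mul_assoc (c * L * μ), ← Real.exp_add]
            rw [show c * Real.exp (-ρ * (t - s)) * (μ * (L * Real.exp (-ρ * (t' - s))))
              = c * L * μ * (Real.exp (-ρ * (t - s)) * Real.exp (-ρ * (t' - s))) by ring,
              ← Real.exp_add]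
            ring_nf
    · have hst' : t' < s := by
        rcases min_lt_iff.mp (not_le.mp hsm) with h | h
        · exact absurd hst (not_le.mpr h)
        · exact h
      have hv0 : δv s = 0 := hδv2 s hsIcc hst'
      have hgs : g s = 0 :=
        Set.indicator_of_notMem (show s ∉ {x : ℝ | x ≤ m} from hsm) _
      rw [hgs, hv0, map_zero, map_zero, norm_zero]
  have key : ‖∫ s in (0:ℝ)..t,
      Matrix.toEuclideanLin (Φ t s) (Matrix.toEuclideanLin (M s) (δv s))‖
      ≤ |∫ s in (0:ℝ)..t, g s| :=
    (intervalIntegral.norm_integral_le_of_norm_le ht0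
      (Filter.Eventually.of_forall fun s hs => hbound s (by rwa [Set.uIoc_of_le ht0])) hint).trans
      (le_abs_self _)
  have hind : (∫ s in (0:ℝ)..t, g s) = ∫ s in (0:ℝ)..m, C * Real.exp (2 * ρ * s) :=
    intervalIntegral.integral_indicator ⟨hm0, hmt⟩
  have hexp : (∫ s in (0:ℝ)..m, C * Real.exp (2 * ρ * s))
      = C * ((Real.exp (2 * ρ * m) - 1) / (2 * ρ)) := by
    rw [intervalIntegral.integral_const_mul,
      intervalIntegral.integral_comp_mul_left (fun x => Real.exp x) (ne_of_gt (by positivity) : (2*ρ) ≠ 0),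
      integral_exp]
    simp [div_eq_inv_mul]
  have habs : t + t' - 2 * m = |t - t'| := by
    rcases le_total t t' with h | h
    · rw [abs_of_nonpos (by linarith), hm, min_eq_left h]; ring
    · rw [abs_of_nonneg (by linarith), hm, min_eq_right h]; ring
  rw [hδx t, norm_neg]
  refine key.trans ?_
  have hX : (1:ℝ) ≤ Real.exp (2 * ρ * m) := Real.one_le_exp (by positivity)
  rw [hind, hexp, abs_of_nonneg (mul_nonneg hC0 (div_nonneg (by linarith) (by positivity)))]
  have hrhs : Real.exp (-ρ * |t - t'|) = Real.exp (-ρ * (t + t')) * Real.exp (2 * ρ * m) := by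
    rw [← Real.exp_add, ← habs]; ring_nf
  rw [hrhs]
  have hE : 0 ≤ Real.exp (-ρ * (t + t')) := (Real.exp_pos _).le
  rw [hC]
  have h2ρ : (0:ℝ) < 2 * ρ := by positivity
  rw [show c * L * μ * Real.exp (-ρ * (t + t')) * ((Real.exp (2 * ρ * m) - 1) / (2 * ρ))
      = (c * L * μ * Real.exp (-ρ * (t + t')) * (Real.exp (2 * ρ * m) - 1)) / (2 * ρ) by ring,
    show c * L * μ / (2 * ρ) * (Real.exp (-ρ * (t + t')) * Real.exp (2 * ρ * m))
      = (c * L * μ * Real.exp (-ρ * (t + t')) * Real.exp (2 * ρ * m)) / (2 * ρ) by ring]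
  gcongr
  nlinarith [mul_nonneg (mul_nonneg (mul_nonneg (le_trans zero_le_one hc) hL) hμ) hE]
end

section
/- Let Z : [0,T] → ℝ^{n×n} satisfy ‖Φ_Z(t,s)‖ ≤ c_Z e^{−ρ(t−s)} for 0 ≤ s ≤ t ≤ T. Suppose δv(s) satisfies ‖δv(s)‖ ≤ L_T λ_G c_Z e^{−ρ(T−s)} for all s ∈ [0,T], and let δx solve δẋ(t) = Z(t)δx(t) − B(t)R(t)⁻¹B(t)ᵀδv(t) with δx(0) = l₀, where ‖B‖_∞ ≤ λ_B, R(t) ⪰ γ_R I. Then ‖δx(t)‖ ≤ Λ (‖l₀‖ e^{−ρt} + L_T e^{−ρ(T−t)}) for all t ∈ [0,T], where Λ = max{c_Z, c_Z² λ_B² λ_G/(2ρ γ_R)}. -/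
open Matrix Set
open scoped Matrix.Norms.L2Operator RealInnerProductSpace

lemma aux_posdef {m : ℕ} (γ : ℝ) (hγ : 0 < γ) (Rm : Matrix (Fin m) (Fin m) ℝ)
    (h : (Rm - γ • 1).PosSemidef) : Rm.PosDef := by
  have h1 : (γ • (1 : Matrix (Fin m) (Fin m) ℝ)).PosDef := by
    rw [Matrix.smul_one_eq_diagonal]
    exact Matrix.PosDef.diagonal (fun _ => hγ)
  have := h1.add_posSemidef h
  simpa using this

lemma aux_inv_bound {m : ℕ} (γ : ℝ) (hγ : 0 < γ) (Rm : Matrix (Fin m) (Fin m) ℝ)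
    (h : (Rm - γ • 1).PosSemidef) (x : Fin m → ℝ) :
    ‖(WithLp.equiv 2 (Fin m → ℝ)).symm (Rm⁻¹ *ᵥ x)‖ ≤
      γ⁻¹ * ‖(WithLp.equiv 2 (Fin m → ℝ)).symm x‖ := by
  have hpd := aux_posdef γ hγ Rm h
  letI := hpd.isUnit.invertible
  set y : Fin m → ℝ := Rm⁻¹ *ᵥ x with hy
  have hRy : Rm *ᵥ y = x := by
    rw [hy, Matrix.mulVec_mulVec, Matrix.mul_inv_of_invertible, Matrix.one_mulVec]
  set Y : EuclideanSpace ℝ (Fin m) := (WithLp.equiv 2 (Fin m → ℝ)).symm y with hYdef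
  set X : EuclideanSpace ℝ (Fin m) := (WithLp.equiv 2 (Fin m → ℝ)).symm x with hXdef
  have hYY : ⟪Y, Y⟫ = y ⬝ᵥ y := by
    rw [EuclideanSpace.inner_eq_star_dotProduct]; simp [hYdef]
  have hYX : ⟪Y, X⟫ = y ⬝ᵥ x := by
    rw [EuclideanSpace.inner_eq_star_dotProduct]; simp [hYdef, hXdef]; exact dotProduct_comm x y
  have hkey : γ * (y ⬝ᵥ y) ≤ y ⬝ᵥ x := by
    have h0 := h.dotProduct_mulVec_nonneg y
    rw [star_trivial, Matrix.sub_mulVec, dotProduct_sub, Matrix.smul_mulVec,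
      Matrix.one_mulVec, dotProduct_smul, hRy] at h0
    have hs : γ • (y ⬝ᵥ y) = γ * (y ⬝ᵥ y) := rfl
    rw [hs] at h0
    linarith
  have hCS : y ⬝ᵥ x ≤ ‖Y‖ * ‖X‖ := by
    rw [← hYX]; exact real_inner_le_norm Y X
  have hnormY : ‖Y‖ ^ 2 = y ⬝ᵥ y := by
    rw [← real_inner_self_eq_norm_sq, hYY]
  rcases eq_or_lt_of_le (norm_nonneg Y) with h0 | h0
  · rw [← h0]; positivity
  · have h2 : γ * ‖Y‖ ≤ ‖X‖ := by nlinarith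
    rw [inv_mul_eq_div, le_div_iff₀ hγ]
    linarith

lemma aux_f_bound {n m : ℕ} (γ : ℝ) (hγ : 0 < γ) (Bm : Matrix (Fin n) (Fin m) ℝ)
    (Rm : Matrix (Fin m) (Fin m) ℝ) (h : (Rm - γ • 1).PosSemidef)
    (v : EuclideanSpace ℝ (Fin n)) :
    ‖Matrix.toEuclideanLin (Bm * Rm⁻¹ * Bmᵀ) v‖ ≤ ‖Bm‖ * (γ⁻¹ * (‖Bm‖ * ‖v‖)) := by
  have hBT : ‖Bmᵀ‖ = ‖Bm‖ := by
    rw [← Matrix.conjTranspose_eq_transpose_of_trivial]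
    exact Matrix.l2_opNorm_conjTranspose Bm
  rw [Matrix.toEuclideanLin_apply]
  change ‖(WithLp.equiv 2 (Fin n → ℝ)).symm ((Bm * Rm⁻¹ * Bmᵀ) *ᵥ (WithLp.equiv 2 (Fin n → ℝ) v))‖ ≤ _
  have hmv : (Bm * Rm⁻¹ * Bmᵀ) *ᵥ (WithLp.equiv 2 (Fin n → ℝ) v)
      = Bm *ᵥ (Rm⁻¹ *ᵥ (Bmᵀ *ᵥ (WithLp.equiv 2 (Fin n → ℝ) v))) := by
    rw [Matrix.mulVec_mulVec, Matrix.mulVec_mulVec]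
  rw [hmv]
  set x1 : Fin m → ℝ := Bmᵀ *ᵥ (WithLp.equiv 2 (Fin n → ℝ) v)
  set x2 : Fin m → ℝ := Rm⁻¹ *ᵥ x1
  calc ‖(WithLp.equiv 2 (Fin n → ℝ)).symm (Bm *ᵥ x2)‖
      ≤ ‖Bm‖ * ‖(WithLp.equiv 2 (Fin m → ℝ)).symm x2‖ := by
        have := Matrix.l2_opNorm_mulVec Bm ((WithLp.equiv 2 (Fin m → ℝ)).symm x2)
        simpa using this
    _ ≤ ‖Bm‖ * (γ⁻¹ * ‖(WithLp.equiv 2 (Fin m → ℝ)).symm x1‖) := by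
        refine mul_le_mul_of_nonneg_left ?_ (norm_nonneg _)
        exact aux_inv_bound γ hγ Rm h x1
    _ ≤ ‖Bm‖ * (γ⁻¹ * (‖Bm‖ * ‖v‖)) := by
        refine mul_le_mul_of_nonneg_left
          (mul_le_mul_of_nonneg_left ?_ (by positivity)) (norm_nonneg _)
        have := Matrix.l2_opNorm_mulVec Bmᵀ v
        rw [hBT] at this
        exact this

lemma aux_key {n : ℕ} (T : ℝ) (hT : 0 ≤ T) (Z : ℝ → Matrix (Fin n) (Fin n) ℝ)
    (hZc : ContinuousOn Z (Icc 0 T))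
    (Φ : ℝ → ℝ → Matrix (Fin n) (Fin n) ℝ)
    (hΦderiv : ∀ s t : ℝ, HasDerivAt (fun r => Φ r s) (Z t * Φ t s) t)
    (hΦinit : ∀ s : ℝ, Φ s s = 1) :
    ∀ s ∈ Icc (0:ℝ) T, ∀ t ∈ Icc (0:ℝ) T, Φ t s * Φ s 0 = Φ t 0 := by
  obtain ⟨C, hC⟩ := (isCompact_Icc (a := (0:ℝ)) (b := T)).exists_bound_of_continuousOn hZc
  set K : NNReal := Real.toNNReal C with hK
  set v : ℝ → Matrix (Fin n) (Fin n) ℝ → Matrix (Fin n) (Fin n) ℝ :=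
    fun t X => Z (max 0 (min t T)) * X with hv
  have hmem : ∀ t : ℝ, max 0 (min t T) ∈ Icc (0:ℝ) T := fun t =>
    ⟨le_max_left _ _, max_le hT (min_le_right _ _)⟩
  have hveq : ∀ t ∈ Icc (0:ℝ) T, ∀ X, v t X = Z t * X := by
    intro t ht X
    have : max 0 (min t T) = t := by
      rw [min_eq_left ht.2, max_eq_right ht.1]
    rw [hv]; simp only [this]
  have hlip : ∀ t, LipschitzWith K (v t) := by
    intro t
    apply LipschitzWith.of_dist_le_mul
    intro X Y
    rw [dist_eq_norm, dist_eq_norm, hv]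
    simp only
    rw [← mul_sub]
    calc ‖Z (max 0 (min t T)) * (X - Y)‖ ≤ ‖Z (max 0 (min t T))‖ * ‖X - Y‖ :=
          Matrix.l2_opNorm_mul _ _
      _ ≤ K * ‖X - Y‖ := by
          refine mul_le_mul_of_nonneg_right ((hC _ (hmem t)).trans ?_) (norm_nonneg _)
          exact Real.le_coe_toNNReal C
  intro s hs t ht
  set g : ℝ → Matrix (Fin n) (Fin n) ℝ := fun r => Φ r s * Φ s 0 with hg
  set P : ℝ → Matrix (Fin n) (Fin n) ℝ := fun r => Φ r 0 with hP
  have hgd : ∀ r : ℝ, HasDerivAt g (Z r * g r) r := by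
    intro r
    have := (hΦderiv s r).mul_const (Φ s 0)
    simpa [hg, mul_assoc] using this
  have hPd : ∀ r : ℝ, HasDerivAt P (Z r * P r) r := fun r => hΦderiv 0 r
  have hgc : ∀ a b : ℝ, ContinuousOn g (Icc a b) :=
    fun a b => fun r _ => (hgd r).continuousAt.continuousWithinAt
  have hPc : ∀ a b : ℝ, ContinuousOn P (Icc a b) :=
    fun a b => fun r _ => (hPd r).continuousAt.continuousWithinAt
  have hinit : g s = P s := by rw [hg, hP]; simp [hΦinit s]
  rcases le_total t s with hts | hst
  · have := ODE_solution_unique_of_mem_Icc_left (v := v) (K := K)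
      (s := fun _ => (univ : Set (Matrix (Fin n) (Fin n) ℝ)))
      (fun r _ => (hlip r).lipschitzOnWith)
      (hgc 0 s)
      (fun r hr => by
        have hr' : r ∈ Icc (0:ℝ) T := ⟨le_of_lt hr.1, hr.2.trans hs.2⟩
        rw [hveq r hr']
        exact (hgd r).hasDerivWithinAt)
      (fun _ _ => trivial)
      (hPc 0 s)
      (fun r hr => by
        have hr' : r ∈ Icc (0:ℝ) T := ⟨le_of_lt hr.1, hr.2.trans hs.2⟩
        rw [hveq r hr']
        exact (hPd r).hasDerivWithinAt)
      (fun _ _ => trivial) hinit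
    exact this ⟨ht.1, hts⟩
  · have := ODE_solution_unique_of_mem_Icc_right (v := v) (K := K)
      (s := fun _ => (univ : Set (Matrix (Fin n) (Fin n) ℝ)))
      (fun r _ => (hlip r).lipschitzOnWith)
      (hgc s T)
      (fun r hr => by
        have hr' : r ∈ Icc (0:ℝ) T := ⟨hs.1.trans hr.1, le_of_lt hr.2⟩
        rw [hveq r hr']
        exact (hgd r).hasDerivWithinAt)
      (fun _ _ => trivial)
      (hPc s T)
      (fun r hr => by
        have hr' : r ∈ Icc (0:ℝ) T := ⟨hs.1.trans hr.1, le_of_lt hr.2⟩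
        rw [hveq r hr']
        exact (hPd r).hasDerivWithinAt)
      (fun _ _ => trivial) hinit
    exact this ⟨hst, ht.2⟩

noncomputable def M2E (n : ℕ) : Matrix (Fin n) (Fin n) ℝ →L[ℝ]
    (EuclideanSpace ℝ (Fin n) →L[ℝ] EuclideanSpace ℝ (Fin n)) :=
  LinearMap.toContinuousLinearMap
    { toFun := fun A => LinearMap.toContinuousLinearMap (Matrix.toEuclideanLin A)
      map_add' := by intro A B; ext x; simp
      map_smul' := by intro c A; ext x; simp }

lemma M2E_apply {n : ℕ} (A : Matrix (Fin n) (Fin n) ℝ) (x : EuclideanSpace ℝ (Fin n)) :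
    M2E n A x = Matrix.toEuclideanLin A x := rfl

lemma M2E_norm_apply_le {n : ℕ} (A : Matrix (Fin n) (Fin n) ℝ) (x : EuclideanSpace ℝ (Fin n)) :
    ‖M2E n A x‖ ≤ ‖A‖ * ‖x‖ := by
  rw [M2E_apply, Matrix.toEuclideanLin_apply]
  simpa using Matrix.l2_opNorm_mulVec A x

lemma M2E_mul {n : ℕ} (A B : Matrix (Fin n) (Fin n) ℝ) (x : EuclideanSpace ℝ (Fin n)) :
    M2E n (A * B) x = M2E n A (M2E n B x) := by
  simp only [M2E_apply, Matrix.toEuclideanLin_apply]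
  simp [Matrix.mulVec_mulVec]

lemma M2E_one {n : ℕ} (x : EuclideanSpace ℝ (Fin n)) : M2E n 1 x = x := by
  simp only [M2E_apply, Matrix.toEuclideanLin_apply]
  simp

set_option maxHeartbeats 1000000 in
/-- boundary-perturbation estimate. With ‖Φ_Z(t,s)‖ ≤ c_Z e^{−ρ(t−s)},
‖δv(s)‖ ≤ L_T λ_G c_Z e^{−ρ(T−s)}, ‖B‖ ≤ λ_B, R ⪰ γ_R I, and δx solving
δẋ = Z δx − BR⁻¹Bᵀ δv with δx(0) = l₀, one has
‖δx(t)‖ ≤ max{c_Z, c_Z²λ_B²λ_G/(2ργ_R)}·(‖l₀‖e^{−ρt} + L_T e^{−ρ(T−t)}). -/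
theorem stmt_16 {n m : ℕ} (T cZ ρ LT lamG lamB γR : ℝ)
    (hT : 0 ≤ T) (hcZ : 1 ≤ cZ) (hρ : 0 < ρ) (hLT : 0 ≤ LT)
    (hlamG : 0 ≤ lamG) (hlamB : 0 ≤ lamB) (hγR : 0 < γR)
    (Z : ℝ → Matrix (Fin n) (Fin n) ℝ) (hZc : ContinuousOn Z (Icc 0 T))
    (Φ : ℝ → ℝ → Matrix (Fin n) (Fin n) ℝ)
    (hΦderiv : ∀ s t : ℝ, HasDerivAt (fun r => Φ r s) (Z t * Φ t s) t)
    (hΦinit : ∀ s : ℝ, Φ s s = 1)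
    (hΦbd : ∀ s t : ℝ, 0 ≤ s → s ≤ t → t ≤ T →
      ‖Φ t s‖ ≤ cZ * Real.exp (-ρ * (t - s)))
    (B : ℝ → Matrix (Fin n) (Fin m) ℝ)
    (hBb : ∀ t ∈ Icc (0 : ℝ) T, ‖B t‖ ≤ lamB)
    (R : ℝ → Matrix (Fin m) (Fin m) ℝ)
    (hRlb : ∀ t ∈ Icc (0 : ℝ) T, (R t - γR • 1).PosSemidef)
    (δv : ℝ → EuclideanSpace ℝ (Fin n))
    (hδv : ∀ s ∈ Icc (0 : ℝ) T, ‖δv s‖ ≤ LT * lamG * cZ * Real.exp (-ρ * (T - s)))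
    (l₀ : EuclideanSpace ℝ (Fin n))
    (δx : ℝ → EuclideanSpace ℝ (Fin n))
    (hδxderiv : ∀ t ∈ Icc (0 : ℝ) T, HasDerivAt δx
      (Matrix.toEuclideanLin (Z t) (δx t)
        - Matrix.toEuclideanLin (B t * (R t)⁻¹ * (B t)ᵀ) (δv t)) t)
    (hδx0 : δx 0 = l₀) :
    ∀ t ∈ Icc (0 : ℝ) T,
      ‖δx t‖ ≤ max cZ (cZ ^ 2 * lamB ^ 2 * lamG / (2 * ρ * γR)) *
        (‖l₀‖ * Real.exp (-ρ * t) + LT * Real.exp (-ρ * (T - t))) := by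
  intro t ht
  have key := aux_key T hT Z hZc Φ hΦderiv hΦinit
  set P : ℝ → Matrix (Fin n) (Fin n) ℝ := fun r => Φ r 0 with hPdef
  have h0T : (0:ℝ) ∈ Icc (0:ℝ) T := ⟨le_refl _, hT⟩
  have hunit : ∀ s ∈ Icc (0:ℝ) T, Φ 0 s * P s = 1 ∧ P s * Φ 0 s = 1 := by
    intro s hs
    have h1 : Φ 0 s * P s = 1 := by
      have := key s hs 0 h0T
      rwa [hΦinit 0] at this
    exact ⟨h1, mul_eq_one_comm.mp h1⟩
  set Qr : ℝ → Matrix (Fin n) (Fin n) ℝ := fun r => Ring.inverse (P r) with hQrdef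
  have hQr_eq : ∀ s ∈ Icc (0:ℝ) T, Qr s = Φ 0 s := by
    intro s hs
    have hu := hunit s hs
    let u : (Matrix (Fin n) (Fin n) ℝ)ˣ := ⟨P s, Φ 0 s, hu.2, hu.1⟩
    have : Qr s = Ring.inverse (u : Matrix (Fin n) (Fin n) ℝ) := rfl
    rw [this, Ring.inverse_unit]
    rfl
  have hQP : ∀ s ∈ Icc (0:ℝ) T, Qr s * P s = 1 := by
    intro s hs; rw [hQr_eq s hs]; exact (hunit s hs).1
  have hPQ : ∀ s ∈ Icc (0:ℝ) T, P s * Qr s = 1 := by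
    intro s hs; rw [hQr_eq s hs]; exact (hunit s hs).2
  have hQrd : ∀ s ∈ Icc (0:ℝ) T, HasDerivAt Qr (-(Qr s * Z s)) s := by
    intro s hs
    have hu := hunit s hs
    let u : (Matrix (Fin n) (Fin n) ℝ)ˣ := ⟨P s, Φ 0 s, hu.2, hu.1⟩
    have h1 : HasFDerivAt Ring.inverse
        (-ContinuousLinearMap.mulLeftRight ℝ _ (↑u⁻¹) (↑u⁻¹)) (P s) :=
      hasFDerivAt_ringInverse u
    have h2 := h1.comp_hasDerivAt s (hΦderiv 0 s)
    have h3 : (↑u⁻¹ : Matrix (Fin n) (Fin n) ℝ) = Qr s := (hQr_eq s hs).symm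
    refine h2.congr_deriv (Eq.symm ?_)
    simp only [ContinuousLinearMap.neg_apply, ContinuousLinearMap.mulLeftRight_apply, h3]
    rw [neg_inj, ← mul_assoc, mul_assoc (Qr s * Z s), hPQ s hs, mul_one]
  have hΦfact : ∀ s t' : ℝ, 0 ≤ s → s ≤ t' → t' ≤ T → Φ t' s = P t' * Qr s := by
    intro s t' h0s hst' ht'
    have hsT : s ∈ Icc (0:ℝ) T := ⟨h0s, hst'.trans ht'⟩
    have h := key s hsT t' ⟨h0s.trans hst', ht'⟩
    calc Φ t' s = Φ t' s * (P s * Qr s) := by rw [hPQ s hsT, mul_one]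
      _ = (Φ t' s * P s) * Qr s := by rw [mul_assoc]
      _ = P t' * Qr s := by rw [h]
  have hδxc : ContinuousOn δx (Icc 0 T) :=
    fun s hs => (hδxderiv s hs).continuousAt.continuousWithinAt
  have hQrc : ContinuousOn Qr (Icc 0 T) :=
    fun s hs => (hQrd s hs).continuousAt.continuousWithinAt
  -- the forcing term
  set Cf : ℝ := lamB ^ 2 * γR⁻¹ * (LT * lamG * cZ) with hCfdef
  have hcZ0 : (0:ℝ) < cZ := lt_of_lt_of_le one_pos hcZ
  have hCf0 : 0 ≤ Cf := by positivity
  set fd : ℝ → EuclideanSpace ℝ (Fin n) :=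
    fun s => M2E n (Z s) (δx s) - deriv δx s with hfddef
  have hfd_eq : ∀ s ∈ Icc (0:ℝ) T,
      fd s = Matrix.toEuclideanLin (B s * (R s)⁻¹ * (B s)ᵀ) (δv s) := by
    intro s hs
    have h := (hδxderiv s hs).deriv
    rw [hfddef]
    simp only [h, M2E_apply]
    abel
  have hfd_bd : ∀ s ∈ Icc (0:ℝ) T, ‖fd s‖ ≤ Cf * Real.exp (-ρ * (T - s)) := by
    intro s hs
    rw [hfd_eq s hs]
    have h1 := hBb s hs
    have h2 := hδv s hs
    have hB0 : (0:ℝ) ≤ ‖B s‖ := norm_nonneg _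
    have hv0 : (0:ℝ) ≤ ‖δv s‖ := norm_nonneg _
    calc ‖Matrix.toEuclideanLin (B s * (R s)⁻¹ * (B s)ᵀ) (δv s)‖
        ≤ ‖B s‖ * (γR⁻¹ * (‖B s‖ * ‖δv s‖)) :=
          aux_f_bound γR hγR (B s) (R s) (hRlb s hs) (δv s)
      _ ≤ lamB * (γR⁻¹ * (lamB * (LT * lamG * cZ * Real.exp (-ρ * (T - s))))) := by
          have hlB : (0:ℝ) ≤ lamB := hB0.trans h1
          gcongr
      _ = Cf * Real.exp (-ρ * (T - s)) := by rw [hCfdef]; ring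
  -- the function u and its derivative
  set u : ℝ → EuclideanSpace ℝ (Fin n) := fun s => M2E n (Qr s) (δx s) with hudef
  have hu : ∀ s ∈ Icc (0:ℝ) T, HasDerivAt u (-(M2E n (Qr s) (fd s))) s := by
    intro s hs
    have h1 : HasDerivAt (fun r => M2E n (Qr r)) (M2E n (-(Qr s * Z s))) s :=
      (M2E n).hasFDerivAt.comp_hasDerivAt s (hQrd s hs)
    have h2 := h1.clm_apply (hδxderiv s hs)
    refine h2.congr_deriv (Eq.symm ?_)
    rw [hfd_eq s hs, map_neg]
    simp only [ContinuousLinearMap.neg_apply]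
    rw [← M2E_apply (Z s) (δx s), ← M2E_apply (B s * (R s)⁻¹ * (B s)ᵀ) (δv s), map_sub, M2E_mul]
    abel
  -- integrability
  obtain ⟨CQ, hCQ⟩ := (isCompact_Icc (a := (0:ℝ)) (b := T)).exists_bound_of_continuousOn hQrc
  have hCQ0 : 0 ≤ CQ := le_trans (norm_nonneg _) (hCQ 0 h0T)
  have hIccsub : Icc (0:ℝ) t ⊆ Icc 0 T := Icc_subset_Icc_right ht.2
  have hmeasQ : MeasureTheory.AEStronglyMeasurable (fun s => M2E n (Qr s)) (MeasureTheory.volume.restrict (Icc 0 t)) :=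
    (((M2E n).continuous.comp_continuousOn (hQrc.mono hIccsub)).aestronglyMeasurable measurableSet_Icc)
  have hmeasfd : MeasureTheory.AEStronglyMeasurable fd (MeasureTheory.volume.restrict (Icc 0 t)) := by
    apply MeasureTheory.AEStronglyMeasurable.sub
    · exact ((((M2E n).continuous.comp_continuousOn (hZc.mono hIccsub)).clm_apply
        (hδxc.mono hIccsub)).aestronglyMeasurable measurableSet_Icc)
    · exact (stronglyMeasurable_deriv δx).aestronglyMeasurable
  have hmeasg : MeasureTheory.AEStronglyMeasurable (fun s => -(M2E n (Qr s) (fd s)))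
      (MeasureTheory.volume.restrict (Icc 0 t)) := by
    apply MeasureTheory.AEStronglyMeasurable.neg
    exact isBoundedBilinearMap_apply.continuous.comp_aestronglyMeasurable
      (hmeasQ.prodMk hmeasfd)
  have hbd : ∀ s ∈ Icc (0:ℝ) t, ‖-(M2E n (Qr s) (fd s))‖ ≤ CQ * Cf := by
    intro s hs
    have hs' := hIccsub hs
    rw [norm_neg]
    calc ‖M2E n (Qr s) (fd s)‖ ≤ ‖Qr s‖ * ‖fd s‖ := M2E_norm_apply_le _ _
      _ ≤ CQ * Cf := by
          apply mul_le_mul (hCQ s hs') ?_ (norm_nonneg _) hCQ0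
          refine (hfd_bd s hs').trans ?_
          nth_rewrite 2 [← mul_one Cf]
          apply mul_le_mul_of_nonneg_left _ hCf0
          rw [Real.exp_le_one_iff]
          have : s ≤ T := hs'.2
          nlinarith
  have hint : IntervalIntegrable (fun s => -(M2E n (Qr s) (fd s)))
      MeasureTheory.volume 0 t := by
    rw [intervalIntegrable_iff_integrableOn_Icc_of_le ht.1]
    apply MeasureTheory.Integrable.mono'
      (MeasureTheory.integrableOn_const (C := CQ * Cf) measure_Icc_lt_top.ne) hmeasg
    exact (MeasureTheory.ae_restrict_iff' measurableSet_Icc).2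
      (MeasureTheory.ae_of_all _ hbd)
  -- FTC
  have huIcc : uIcc (0:ℝ) t = Icc 0 t := uIcc_of_le ht.1
  have hFTC := intervalIntegral.integral_eq_sub_of_hasDerivAt (f := u)
    (f' := fun s => -(M2E n (Qr s) (fd s)))
    (fun s hs => hu s (hIccsub (huIcc ▸ hs))) hint
  have hQr0 : Qr 0 = 1 := by
    rw [hQrdef]
    simp only [hPdef]
    rw [hΦinit 0, Ring.inverse_one]
  have hu0 : u 0 = l₀ := by
    rw [hudef]
    simp only [hQr0, hδx0, M2E_one]
  have hut : u t = l₀ + ∫ s in (0:ℝ)..t, -(M2E n (Qr s) (fd s)) := by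
    rw [hFTC, hu0]; abel
  have hδxt : δx t = M2E n (P t) (u t) := by
    rw [hudef]
    simp only
    rw [← M2E_mul, hPQ t ht, M2E_one]
  have hsplit : δx t = M2E n (P t) l₀
      + M2E n (P t) (∫ s in (0:ℝ)..t, -(M2E n (Qr s) (fd s))) := by
    rw [hδxt, hut, map_add]
  -- first term
  have hPt : ‖P t‖ ≤ cZ * Real.exp (-ρ * t) := by
    have := hΦbd 0 t le_rfl ht.1 ht.2
    simpa using this
  have hterm1 : ‖M2E n (P t) l₀‖ ≤ cZ * (‖l₀‖ * Real.exp (-ρ * t)) := by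
    calc ‖M2E n (P t) l₀‖ ≤ ‖P t‖ * ‖l₀‖ := M2E_norm_apply_le _ _
      _ ≤ (cZ * Real.exp (-ρ * t)) * ‖l₀‖ :=
          mul_le_mul_of_nonneg_right hPt (norm_nonneg _)
      _ = cZ * (‖l₀‖ * Real.exp (-ρ * t)) := by ring
  -- second term
  have hcomm : M2E n (P t) (∫ s in (0:ℝ)..t, -(M2E n (Qr s) (fd s)))
      = ∫ s in (0:ℝ)..t, M2E n (P t) (-(M2E n (Qr s) (fd s))) :=
    ((M2E n (P t)).intervalIntegral_comp_comm hint).symm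
  set φ : ℝ → ℝ := fun s => cZ * Cf * Real.exp (2*ρ*s - ρ*(t+T)) with hφdef
  have hφcont : Continuous φ := by fun_prop
  have hφint : IntervalIntegrable φ MeasureTheory.volume 0 t := hφcont.intervalIntegrable 0 t
  have hbound2 : ∀ s ∈ Set.uIoc (0:ℝ) t, ‖M2E n (P t) (-(M2E n (Qr s) (fd s)))‖ ≤ φ s := by
    intro s hs
    rw [uIoc_of_le ht.1] at hs
    have h0s : 0 ≤ s := le_of_lt hs.1
    have hst : s ≤ t := hs.2
    have hsT : s ∈ Icc (0:ℝ) T := ⟨h0s, hst.trans ht.2⟩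
    rw [map_neg, norm_neg, ← M2E_mul, ← hΦfact s t h0s hst ht.2]
    have hexp : (-ρ*(t-s)) + (-ρ*(T-s)) = 2*ρ*s - ρ*(t+T) := by ring
    calc ‖M2E n (Φ t s) (fd s)‖ ≤ ‖Φ t s‖ * ‖fd s‖ := M2E_norm_apply_le _ _
      _ ≤ (cZ * Real.exp (-ρ*(t-s))) * (Cf * Real.exp (-ρ*(T-s))) :=
          mul_le_mul (hΦbd s t h0s hst ht.2) (hfd_bd s hsT) (norm_nonneg _) (by positivity)
      _ = φ s := by
          rw [hφdef]
          simp only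
          rw [← hexp, Real.exp_add]
          ring
  -- value of the integral of φ
  have hF : ∀ s : ℝ, HasDerivAt (fun r => cZ * Cf / (2*ρ) * Real.exp (2*ρ*r - ρ*(t+T)))
      (φ s) s := by
    intro s
    have h1 : HasDerivAt (fun r : ℝ => 2*ρ*r - ρ*(t+T)) (2*ρ) s := by
      simpa using ((hasDerivAt_id s).const_mul (2*ρ)).sub_const (ρ*(t+T))
    have h2 := (h1.exp).const_mul (cZ * Cf / (2*ρ))
    refine h2.congr_deriv (Eq.symm ?_)
    rw [hφdef]
    field_simp
  have hφval := intervalIntegral.integral_eq_sub_of_hasDerivAt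
    (f := fun r => cZ * Cf / (2*ρ) * Real.exp (2*ρ*r - ρ*(t+T)))
    (f' := φ) (fun s _ => hF s) hφint
  have hφval' : (∫ s in (0:ℝ)..t, φ s) = cZ * Cf / (2*ρ) * Real.exp (2*ρ*t - ρ*(t+T))
      - cZ * Cf / (2*ρ) * Real.exp (2*ρ*0 - ρ*(t+T)) := hφval
  have hφle : (∫ s in (0:ℝ)..t, φ s) ≤ cZ * Cf / (2*ρ) * Real.exp (-ρ*(T-t)) := by
    rw [hφval']
    have he1 : 2*ρ*t - ρ*(t+T) = -ρ*(T-t) := by ring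
    have he2 : 2*ρ*0 - ρ*(t+T) = -(ρ*(t+T)) := by ring
    rw [he1, he2]
    have h3 : 0 ≤ cZ * Cf / (2*ρ) := by positivity
    nlinarith [Real.exp_pos (-(ρ*(t+T))), mul_le_mul_of_nonneg_left
      (le_of_lt (Real.exp_pos (-(ρ*(t+T))))) h3]
  have hφnn : 0 ≤ ∫ s in (0:ℝ)..t, φ s := by
    apply intervalIntegral.integral_nonneg ht.1
    intro s _
    rw [hφdef]
    positivity
  have hterm2 : ‖M2E n (P t) (∫ s in (0:ℝ)..t, -(M2E n (Qr s) (fd s)))‖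
      ≤ cZ * Cf / (2*ρ) * Real.exp (-ρ*(T-t)) := by
    rw [hcomm]
    refine (intervalIntegral.norm_integral_le_of_norm_le ht.1 ?_ hφint).trans ?_
    · exact MeasureTheory.ae_of_all _ (fun s hs => hbound2 s (by rwa [uIoc_of_le ht.1]))
    · exact hφle
  -- combine
  have hfinal : ‖δx t‖ ≤ cZ * (‖l₀‖ * Real.exp (-ρ * t))
      + cZ * Cf / (2*ρ) * Real.exp (-ρ*(T-t)) := by
    rw [hsplit]
    exact (norm_add_le _ _).trans (add_le_add hterm1 hterm2)
  have hcoef : cZ * Cf / (2*ρ) = cZ ^ 2 * lamB ^ 2 * lamG / (2 * ρ * γR) * LT := by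
    rw [hCfdef]
    field_simp
  set Λ := max cZ (cZ ^ 2 * lamB ^ 2 * lamG / (2 * ρ * γR)) with hΛdef
  have hA0 : 0 ≤ ‖l₀‖ * Real.exp (-ρ * t) := by positivity
  have hB0 : 0 ≤ LT * Real.exp (-ρ * (T - t)) := by positivity
  calc ‖δx t‖ ≤ cZ * (‖l₀‖ * Real.exp (-ρ * t))
        + cZ ^ 2 * lamB ^ 2 * lamG / (2 * ρ * γR) * (LT * Real.exp (-ρ*(T-t))) := by
        have heq : cZ * Cf / (2*ρ) * Real.exp (-ρ*(T-t))
            = cZ ^ 2 * lamB ^ 2 * lamG / (2 * ρ * γR) * (LT * Real.exp (-ρ*(T-t))) := by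
          rw [hCfdef]; field_simp
        linarith [hfinal]
    _ ≤ Λ * (‖l₀‖ * Real.exp (-ρ * t)) + Λ * (LT * Real.exp (-ρ * (T - t))) := by
        apply add_le_add
        · exact mul_le_mul_of_nonneg_right (le_max_left _ _) hA0
        · exact mul_le_mul_of_nonneg_right (le_max_right _ _) hB0
    _ = Λ * (‖l₀‖ * Real.exp (-ρ * t) + LT * Real.exp (-ρ * (T - t))) := by ring
end
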